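/- Under the Harten setup, for every fluid state (ρ, V, p) and every i ∈ {1,…,d} the identity (β/(β+1))·⟨W, F^{(i)}⟩ = G^{(i)} holds, where ⟨·,·⟩ is the Euclidean inner product on ℝ^{d+2}. Consequently the potential flux ψ^{(i)} := ⟨W, F^{(i)}⟩ − G^{(i)} satisfies G^{(i)} = β·ψ^{(i)}. -/

import Mathlib

/-- Harten's entropy function `S = β·ρ·(p·ρ^(−γ))^(1/(α+γ))`. -/
noncomputable def hartenS (γ α β ρ p : ℝ) : ℝ :=
  β * ρ * (p * ρ ^ (-γ)) ^ (1 / (α + γ))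

/-- Harten's entropy variables. -/
noncomputable def hartenW (d : ℕ) (γ α ρ p : ℝ) (V : Fin d → ℝ) : Fin (d + 2) → ℝ :=
  fun j =>
    (ρ / p) * (p * ρ ^ (-γ)) ^ (1 / (α + γ)) *
      (Fin.cons (α := fun _ => ℝ) (-(α / (γ - 1)) * (p / ρ) - (∑ i, V i ^ 2) / 2)
        (Fin.snoc V (-1)) j)

/-- The Euler flux `F^(i) = (ρV_i, ρV_iV + p·e_i, (e+p)V_i) ∈ ℝ^(d+2)`, with
total energy `e = p/(γ−1) + ρ‖V‖²/2`. -/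
noncomputable def eulerFlux (d : ℕ) (γ ρ p : ℝ) (V : Fin d → ℝ) (i : Fin d) :
    Fin (d + 2) → ℝ :=
  Fin.cons (α := fun _ => ℝ) (ρ * V i)
    (Fin.snoc (fun j => ρ * V i * V j + p * (if j = i then 1 else 0))
      ((p / (γ - 1) + ρ * (∑ k, V k ^ 2) / 2 + p) * V i))

/-- Under the Harten setup, `(β/(β+1))·⟨W, F^(i)⟩ = G^(i)` where `G^(i) = V_i·S`;
consequently the potential flux `ψ^(i) = ⟨W, F^(i)⟩ − G^(i)` satisfies
`G^(i) = β·ψ^(i)`. -/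
theorem harten_potential_flux_identity
    (d : ℕ) (hd : 1 ≤ d) (γ α β : ℝ) (hγ : 1 < γ) (hα : 0 < α ∨ α < -γ)
    (hβ : β = -(γ + α) / (γ - 1))
    (ρ p : ℝ) (hρ : 0 < ρ) (hp : 0 < p) (V : Fin d → ℝ) (i : Fin d) :
    (β / (β + 1)) * (∑ j, hartenW d γ α ρ p V j * eulerFlux d γ ρ p V i j)
        = V i * hartenS γ α β ρ p ∧
      V i * hartenS γ α β ρ p
        = β * ((∑ j, hartenW d γ α ρ p V j * eulerFlux d γ ρ p V i j)
            - V i * hartenS γ α β ρ p) := by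
  have hγ1 : γ - 1 ≠ 0 := sub_ne_zero.2 (ne_of_gt hγ)
  have hα1 : α + 1 ≠ 0 := by rcases hα with h | h <;> [nlinarith; nlinarith]
  have hβ1' : β + 1 = -(α + 1) / (γ - 1) := by rw [hβ]; field_simp; ring
  have hβ1 : β + 1 ≠ 0 := by
    rw [hβ1']; exact div_ne_zero (neg_ne_zero.2 hα1) hγ1
  set K := (p * ρ ^ (-γ)) ^ (1 / (α + γ)) with hK
  have hsum : (∑ j, hartenW d γ α ρ p V j * eulerFlux d γ ρ p V i j)
      = (β + 1) * (ρ * K * V i) := by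
    unfold hartenW eulerFlux
    rw [Fin.sum_univ_succ, Fin.sum_univ_castSucc]
    simp only [Fin.cons_zero, Fin.cons_succ, Fin.snoc_castSucc, Fin.snoc_last]
    have hmid : ∀ k : Fin d,
        (ρ / p) * K * V k * (ρ * V i * V k + p * (if k = i then 1 else 0))
          = ρ / p * K * ρ * V i * (V k ^ 2)
            + (if k = i then ρ * K * V i else 0) := by
      intro k
      by_cases h : k = i
      · subst h; simp only [eq_self_iff_true, if_true]; field_simp
      · simp only [if_neg h]; ring
    rw [Finset.sum_congr rfl (fun k _ => hmid k), Finset.sum_add_distrib,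
      ← Finset.mul_sum, Finset.sum_ite_eq' Finset.univ i]
    simp only [Finset.mem_univ, if_pos]
    rw [hβ1']
    field_simp
    ring
  have hS : hartenS γ α β ρ p = β * ρ * K := rfl
  rw [hsum, hS]
  constructor
  · field_simp
  · ring
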